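/- Fix λ > 0. There exists θ_2 > 0 such that for all sufficiently large n and every c ≥ 0, ∑_{i=0}^{n-1} (e^{-c} log n / n)^{e^λ (1-λ/n)^i} ≤ e^{-c(1-o(1))} · θ_2 · log log n; one may take θ_2 = 2/λ. -/

import Mathlib

open Filter Real Finset

lemma log_le_half_self {y : ℝ} (hy : 0 < y) : Real.log y ≤ y / 2 := by
  have hs : 0 < Real.sqrt y := Real.sqrt_pos.mpr hy
  have h1 : Real.log (Real.sqrt y) ≤ Real.sqrt y - 1 := Real.log_le_sub_one_of_pos hs
  have h2 : Real.log (Real.sqrt y) = Real.log y / 2 := Real.log_sqrt hy.le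
  nlinarith [Real.sq_sqrt hy.le, sq_nonneg (Real.sqrt y - 2)]

lemma pow_mul_le_one' {t : ℝ} (ht0 : 0 ≤ t) (ht1 : t ≤ 1) (k : ℕ) :
    (1 - t) ^ k * (1 + (k : ℝ) * t) ≤ 1 := by
  have h1 : (1 - t) ^ k ≤ Real.exp (-((k : ℝ) * t)) := by
    have hle : (1 - t) ≤ Real.exp (-t) := by linarith [Real.add_one_le_exp (-t)]
    calc (1 - t) ^ k ≤ (Real.exp (-t)) ^ k := pow_le_pow_left₀ (by linarith) hle k
      _ = Real.exp (-((k : ℝ) * t)) := by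
          rw [← Real.exp_nat_mul]; congr 1; ring
  have h2 : 1 + (k : ℝ) * t ≤ Real.exp ((k : ℝ) * t) := by
    linarith [Real.add_one_le_exp ((k : ℝ) * t)]
  have h3 : (0 : ℝ) ≤ 1 + (k : ℝ) * t := by positivity
  calc (1 - t) ^ k * (1 + (k : ℝ) * t)
      ≤ Real.exp (-((k : ℝ) * t)) * Real.exp ((k : ℝ) * t) :=
        mul_le_mul h1 h2 h3 (Real.exp_nonneg _)
    _ = 1 := by rw [← Real.exp_add, neg_add_cancel, Real.exp_zero]

set_option maxHeartbeats 1600000 in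
/-- Upper bound for the key sum, uniformly over `c ≥ 0`:
`∑_{i=0}^{n-1} (e^{-c} log n / n)^{e^λ (1-λ/n)^i} ≤ e^{-c(1-o(1))} · (2/λ) · log log n`. -/
theorem sum_rpow_upper_bound (l : ℝ) (hl : 0 < l) :
    ∃ ε : ℕ → ℝ, Tendsto ε atTop (nhds 0) ∧
      ∀ᶠ n : ℕ in atTop, ∀ c : ℝ, 0 ≤ c →
        ∑ i ∈ Finset.range n,
            (Real.exp (-c) * Real.log n / n) ^ (Real.exp l * (1 - l / n) ^ (i : ℕ))
          ≤ Real.exp (-c * (1 - ε n)) * (2 / l) * Real.log (Real.log n) := by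
  refine ⟨fun n => 2 * l ^ 2 / (n : ℝ), tendsto_const_div_atTop_nhds_zero_nat _, ?_⟩
  have hlog : Tendsto (fun n : ℕ => Real.log n) atTop atTop :=
    Real.tendsto_log_atTop.comp tendsto_natCast_atTop_atTop
  have hloglog : Tendsto (fun n : ℕ => Real.log (Real.log n)) atTop atTop :=
    Real.tendsto_log_atTop.comp hlog
  have hdiv : Tendsto (fun n : ℕ => Real.log n / n) atTop (nhds 0) :=
    Real.isLittleO_log_id_atTop.tendsto_div_nhds_zero.comp tendsto_natCast_atTop_atTop
  have hdiv4 : Tendsto (fun n : ℕ => l * Real.log n / (4 * n)) atTop (nhds 0) := by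
    have := hdiv.const_mul (l / 4)
    rw [mul_zero] at this
    convert this using 2 with n
    ring
  have hdiv2 : Tendsto (fun n : ℕ => Real.exp (2 * l ^ 2 * Real.log n / n)) atTop
      (nhds 1) := by
    have h0 : Tendsto (fun n : ℕ => 2 * l ^ 2 * Real.log n / n) atTop (nhds 0) := by
      have := hdiv.const_mul (2 * l ^ 2)
      rw [mul_zero] at this
      convert this using 2 with n
      ring
    have := (Real.continuous_exp.tendsto 0).comp h0
    simpa [Function.comp_def] using this
  have hldiv : Tendsto (fun n : ℕ => l / (n : ℝ)) atTop (nhds 0) :=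
    tendsto_const_div_atTop_nhds_zero_nat l
  have hl2div : Tendsto (fun n : ℕ => 2 * l ^ 2 / (n : ℝ)) atTop (nhds 0) :=
    tendsto_const_div_atTop_nhds_zero_nat _
  filter_upwards [eventually_ge_atTop 3, hlog.eventually_gt_atTop 1,
    hloglog.eventually_ge_atTop 8,
    hdiv4.eventually (eventually_le_nhds (show (0:ℝ) < 1 by norm_num)),
    hdiv2.eventually (eventually_le_nhds (show (1:ℝ) < 2 by norm_num)),
    hldiv.eventually (eventually_le_nhds (show (0:ℝ) < 1/2 by norm_num)),
    hl2div.eventually (eventually_le_nhds (show (0:ℝ) < 1/2 by norm_num))]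
    with n hn3 hlog1 hll8 hrho1 hexp2 ht12 hE12
  intro c hc
  set N : ℝ := (n : ℝ) with hN
  clear_value N
  have hN3 : (3 : ℝ) ≤ N := by rw [hN]; exact_mod_cast hn3
  have hN0 : (0 : ℝ) < N := by linarith
  have hlogN : 1 < Real.log N := hlog1
  have hlogN0 : 0 < Real.log N := by linarith
  have hllN : (8 : ℝ) ≤ Real.log (Real.log N) := hll8
  have hllN0 : 0 < Real.log (Real.log N) := by linarith
  have hBB : Real.log (Real.log N) ≤ Real.log N / 2 := log_le_half_self hlogN0
  set t : ℝ := l / N with ht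
  clear_value t
  have ht0 : 0 < t := by rw [ht]; exact div_pos hl hN0
  have ht2 : t ≤ 1 / 2 := ht12
  set q : ℝ := 1 - t with hq
  clear_value q
  have hq0 : 0 < q := by simp only [hq]; linarith
  have hq1 : q ≤ 1 := by simp only [hq]; linarith
  set a : ℝ := Real.exp l * q ^ (n - 1) with ha
  clear_value a
  have ha0 : 0 < a := by rw [ha]; exact mul_pos (Real.exp_pos l) (pow_pos hq0 _)
  set E : ℝ := 2 * l ^ 2 / N with hE
  clear_value E
  have hE0 : 0 < E := by rw [hE]; exact div_pos (by positivity) hN0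
  have hE2 : E ≤ 1 / 2 := hE12
  -- lower bound on a : a ≥ 1 - E
  have haE : 1 - E ≤ a := by
    have hq_lb : Real.exp (-(t + 2 * t ^ 2)) ≤ q := by
      have hqne : q ≠ 0 := ne_of_gt hq0
      have h1q : 1 / q = 1 + t / q := by
        field_simp
        rw [hq]; ring
      have h1 : 1 / q ≤ Real.exp (t / q) := by
        rw [h1q]; linarith [Real.add_one_le_exp (t / q)]
      have h2 : Real.exp (-(t / q)) ≤ q := by
        rw [Real.exp_neg, inv_le_comm₀ (Real.exp_pos _) hq0, inv_eq_one_div]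
        exact h1
      have h3 : t / q ≤ t + 2 * t ^ 2 := by
        rw [div_le_iff₀ hq0]
        nlinarith
      calc Real.exp (-(t + 2 * t ^ 2)) ≤ Real.exp (-(t / q)) := by
            apply Real.exp_le_exp.mpr; linarith
        _ ≤ q := h2
    have hpow : Real.exp (-(t + 2 * t ^ 2)) ^ (n - 1) ≤ q ^ (n - 1) :=
      pow_le_pow_left₀ (Real.exp_nonneg _) hq_lb _
    have hcast : ((n - 1 : ℕ) : ℝ) ≤ N := by
      rw [hN]; exact_mod_cast Nat.cast_le.mpr (Nat.sub_le n 1)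
    have hcast0 : (0 : ℝ) ≤ ((n - 1 : ℕ) : ℝ) := Nat.cast_nonneg _
    have hexp_eq : Real.exp (-(t + 2 * t ^ 2)) ^ (n - 1)
        = Real.exp (-(((n - 1 : ℕ) : ℝ) * (t + 2 * t ^ 2))) := by
      rw [← Real.exp_nat_mul]; congr 1; ring
    have harg : ((n - 1 : ℕ) : ℝ) * (t + 2 * t ^ 2) ≤ l + 2 * l ^ 2 / N := by
      have h1 : ((n - 1 : ℕ) : ℝ) * (t + 2 * t ^ 2) ≤ N * (t + 2 * t ^ 2) := by
        apply mul_le_mul_of_nonneg_right hcast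
        positivity
      have h2 : N * (t + 2 * t ^ 2) = l + 2 * l ^ 2 / N := by
        rw [ht]; field_simp
      linarith
    have : Real.exp (-(2 * l ^ 2 / N)) ≤ a := by
      rw [ha]
      calc Real.exp (-(2 * l ^ 2 / N)) = Real.exp l * Real.exp (-(l + 2 * l ^ 2 / N)) := by
            rw [← Real.exp_add]; congr 1; ring
        _ ≤ Real.exp l * Real.exp (-(((n - 1 : ℕ) : ℝ) * (t + 2 * t ^ 2))) := by
            apply mul_le_mul_of_nonneg_left _ (Real.exp_nonneg _)
            exact Real.exp_le_exp.mpr (by linarith)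
        _ = Real.exp l * Real.exp (-(t + 2 * t ^ 2)) ^ (n - 1) := by rw [hexp_eq]
        _ ≤ Real.exp l * q ^ (n - 1) := by
            apply mul_le_mul_of_nonneg_left hpow (Real.exp_nonneg _)
    have h4 : 1 - E ≤ Real.exp (-E) := by linarith [Real.add_one_le_exp (-E)]
    rw [← hE] at this
    rw [hE] at this h4 ⊢
    linarith
  have ha12 : 1 / 2 ≤ a := by linarith
  -- the quantity L
  set L : ℝ := c + Real.log N - Real.log (Real.log N) with hL
  clear_value L
  have hL2 : Real.log N / 2 ≤ L := by rw [hL]; linarith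
  have hL0 : 0 ≤ L := by linarith
  set M : ℝ := Real.log N - Real.log (Real.log N) with hM
  clear_value M
  have hM0 : 0 ≤ M := by rw [hM]; linarith
  have hMle : M ≤ Real.log N := by rw [hM]; linarith
  -- x and its log
  set x : ℝ := Real.exp (-c) * Real.log N / N with hx
  clear_value x
  have hx0 : 0 < x := by
    rw [hx]; exact div_pos (mul_pos (Real.exp_pos _) hlogN0) hN0
  have hlogx : Real.log x = -L := by
    rw [hx, Real.log_div (by positivity) (by linarith), Real.log_mul (Real.exp_ne_zero _)
      (by linarith), Real.log_exp, hL]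
    ring
  -- term-by-term bound
  have key : ∀ i ∈ Finset.range n,
      x ^ (Real.exp l * q ^ i) ≤ Real.exp (-(a * L)) * Real.exp (-(a * t * L)) ^ (n - 1 - i) := by
    intro i hi
    have hilt : i < n := Finset.mem_range.mp hi
    set k := n - 1 - i with hk
    have hik : i + k = n - 1 := by omega
    have hqk : q ^ (n - 1) = q ^ i * q ^ k := by rw [← pow_add, hik]
    have hb : a * (1 + (k : ℝ) * t) ≤ Real.exp l * q ^ i := by
      have haux := pow_mul_le_one' ht0.le (by linarith) k
      calc a * (1 + (k : ℝ) * t)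
          = (Real.exp l * q ^ i) * ((1 - t) ^ k * (1 + (k : ℝ) * t)) := by
            rw [ha, hqk, ← hq]; ring
        _ ≤ (Real.exp l * q ^ i) * 1 := by
            apply mul_le_mul_of_nonneg_left haux
              (mul_nonneg (Real.exp_nonneg l) (pow_nonneg hq0.le i))
        _ = Real.exp l * q ^ i := mul_one _
    rw [Real.rpow_def_of_pos hx0, hlogx]
    have hrhs : Real.exp (-(a * L)) * Real.exp (-(a * t * L)) ^ k
        = Real.exp (-(a * (1 + (k : ℝ) * t) * L)) := by
      rw [← Real.exp_nat_mul, ← Real.exp_add]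
      congr 1; ring
    rw [hrhs]
    apply Real.exp_le_exp.mpr
    have hmul := mul_le_mul_of_nonneg_right hb hL0
    calc -L * (Real.exp l * q ^ i) = -(Real.exp l * q ^ i * L) := by ring
      _ ≤ -(a * (1 + (k : ℝ) * t) * L) := neg_le_neg hmul
  -- sum bound via geometric series
  set r : ℝ := Real.exp (-(a * t * L)) with hr
  clear_value r
  have hr0 : 0 < r := by rw [hr]; exact Real.exp_pos _
  set rho : ℝ := l * Real.log N / (4 * N) with hrho
  clear_value rho
  have hrho0 : 0 < rho := by
    rw [hrho]; exact div_pos (mul_pos hl hlogN0) (by linarith)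
  have hrho_le_one : rho ≤ 1 := hrho1
  have hrho_le : rho ≤ a * t * L := by
    have h1 : (1 / 2) * t * (Real.log N / 2) ≤ a * t * L := by
      have h0 := mul_le_mul_of_nonneg_right
        (mul_le_mul ha12 hL2 (by positivity) ha0.le) ht0.le
      calc (1 / 2) * t * (Real.log N / 2) = 1 / 2 * (Real.log N / 2) * t := by ring
        _ ≤ a * L * t := h0
        _ = a * t * L := by ring
    have h2 : (1 / 2) * t * (Real.log N / 2) = rho := by
      rw [hrho, ht]; field_simp; ring
    exact h2 ▸ h1
  have hr_le : r ≤ Real.exp (-rho) := by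
    rw [hr]; exact Real.exp_le_exp.mpr (by linarith)
  have hone_sub : rho / 2 ≤ 1 - r := by
    have h1 : Real.exp (-rho) ≤ (1 + rho)⁻¹ := by
      rw [Real.exp_neg]
      apply inv_anti₀ (by linarith)
      linarith [Real.add_one_le_exp rho]
    have h2 : (1 + rho)⁻¹ ≤ 1 - rho / 2 := by
      rw [inv_le_iff_one_le_mul₀ (by linarith : (0:ℝ) < 1 + rho)]
      have hnn : (0:ℝ) ≤ rho / 2 * (1 - rho) :=
        mul_nonneg (by linarith) (by linarith)
      have hexp : (1 - rho / 2) * (1 + rho) = 1 + rho / 2 * (1 - rho) := by ring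
      rw [hexp]; linarith
    linarith
  have hr1 : r < 1 := by linarith
  have hgeom : ∑ j ∈ Finset.range n, r ^ j ≤ 2 / rho := by
    set S : ℝ := ∑ j ∈ Finset.range n, r ^ j with hS
    clear_value S
    have hgm : S * (r - 1) = r ^ n - 1 := by rw [hS]; exact geom_sum_mul r n
    have hSnn : (0 : ℝ) ≤ S := by
      rw [hS]; exact Finset.sum_nonneg fun j _ => pow_nonneg hr0.le j
    have heq : S * (1 - r) = 1 - r ^ n := by linear_combination (-1 : ℝ) * hgm
    have h1 : S * (1 - r) ≤ 1 := by
      rw [heq]; linarith [pow_nonneg hr0.le n]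
    have h2 : S * (rho / 2) ≤ 1 :=
      le_trans (mul_le_mul_of_nonneg_left hone_sub hSnn) h1
    rw [le_div_iff₀ hrho0]
    have h3 : S * rho = 2 * (S * (rho / 2)) := by ring
    linarith
  have hsum : ∑ i ∈ Finset.range n, x ^ (Real.exp l * q ^ i)
      ≤ Real.exp (-(a * L)) * (2 / rho) := by
    calc ∑ i ∈ Finset.range n, x ^ (Real.exp l * q ^ i)
        ≤ ∑ i ∈ Finset.range n, Real.exp (-(a * L)) * r ^ (n - 1 - i) :=
          Finset.sum_le_sum key
      _ = Real.exp (-(a * L)) * ∑ i ∈ Finset.range n, r ^ (n - 1 - i) := by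
          rw [Finset.mul_sum]
      _ = Real.exp (-(a * L)) * ∑ j ∈ Finset.range n, r ^ j := by
          rw [Finset.sum_range_reflect (fun j => r ^ j) n]
      _ ≤ Real.exp (-(a * L)) * (2 / rho) := by
          apply mul_le_mul_of_nonneg_left hgeom (Real.exp_nonneg _)
  -- final chain
  have hfinal : Real.exp (-(a * L)) ≤ Real.exp (-c * (1 - E)) * 2 * (Real.log N / N) := by
    have h1 : Real.exp (-(a * L)) ≤ Real.exp (-((1 - E) * (c + M))) := by
      apply Real.exp_le_exp.mpr
      have hLcM : L = c + M := by rw [hL, hM]; ring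
      rw [hLcM]
      have := mul_le_mul_of_nonneg_right haE (by linarith : (0:ℝ) ≤ c + M)
      linarith
    have h2 : Real.exp (-((1 - E) * (c + M)))
        = Real.exp (-c * (1 - E)) * Real.exp (E * M) * Real.exp (-M) := by
      rw [← Real.exp_add, ← Real.exp_add]; congr 1; ring
    have h3 : Real.exp (-M) = Real.log N / N := by
      rw [hM, neg_sub, Real.exp_sub, Real.exp_log hlogN0, Real.exp_log hN0]
    have h4 : Real.exp (E * M) ≤ 2 := by
      calc Real.exp (E * M) ≤ Real.exp (E * Real.log N) := by
            apply Real.exp_le_exp.mpr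
            exact mul_le_mul_of_nonneg_left hMle hE0.le
        _ = Real.exp (2 * l ^ 2 * Real.log N / N) := by rw [hE]; congr 1; ring
        _ ≤ 2 := hexp2
    calc Real.exp (-(a * L)) ≤ Real.exp (-c * (1 - E)) * Real.exp (E * M) * Real.exp (-M) := by
          rw [← h2]; exact h1
      _ ≤ Real.exp (-c * (1 - E)) * 2 * Real.exp (-M) := by
          apply mul_le_mul_of_nonneg_right _ (Real.exp_nonneg _)
          apply mul_le_mul_of_nonneg_left h4 (Real.exp_nonneg _)
      _ = Real.exp (-c * (1 - E)) * 2 * (Real.log N / N) := by rw [h3]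
  have hNne : N ≠ 0 := ne_of_gt hN0
  have hlNne : Real.log N ≠ 0 := ne_of_gt hlogN0
  have hlne : l ≠ 0 := ne_of_gt hl
  have hrho_val : 2 / rho = 8 * N / (l * Real.log N) := by
    rw [hrho]; field_simp; ring
  have hlast : Real.exp (-(a * L)) * (2 / rho)
      ≤ Real.exp (-c * (1 - E)) * (2 / l) * Real.log (Real.log N) := by
    have hstep : Real.exp (-(a * L)) * (2 / rho)
        ≤ Real.exp (-c * (1 - E)) * 2 * (Real.log N / N) * (8 * N / (l * Real.log N)) := by
      rw [hrho_val]
      apply mul_le_mul_of_nonneg_right hfinal (by positivity)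
    have heq : Real.exp (-c * (1 - E)) * 2 * (Real.log N / N) * (8 * N / (l * Real.log N))
        = Real.exp (-c * (1 - E)) * (16 / l) := by
      field_simp
      ring
    rw [heq] at hstep
    have h16 : Real.exp (-c * (1 - E)) * (16 / l)
        ≤ Real.exp (-c * (1 - E)) * (2 / l) * Real.log (Real.log N) := by
      have hexp_pos : 0 < Real.exp (-c * (1 - E)) := Real.exp_pos _
      rw [mul_assoc]
      apply mul_le_mul_of_nonneg_left _ hexp_pos.le
      have h8 := mul_le_mul_of_nonneg_left hllN (by positivity : (0:ℝ) ≤ 2 / l)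
      calc (16 : ℝ) / l = 2 / l * 8 := by ring
        _ ≤ 2 / l * Real.log (Real.log N) := h8
    linarith
  calc ∑ i ∈ Finset.range n, x ^ (Real.exp l * q ^ i)
      ≤ Real.exp (-(a * L)) * (2 / rho) := hsum
    _ ≤ Real.exp (-c * (1 - E)) * (2 / l) * Real.log (Real.log N) := hlast
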